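/- For terms α, β in the binary theta-term system with K_0(α) = K_0(β) = ∅, if α < β then α⁻ < β⁻, and (K_{i+1}(α))⁻ = K_i(α⁻), where α⁻ is obtained by replacing every occurrence of θ̄_i by θ̄_{i-1}. -/
import Mathlib


/-- Binary theta terms. -/
inductive BTerm : Type
  | zero : BTerm
  | th : ℕ → BTerm → BTerm → BTerm
  deriving DecidableEq

namespace BTerm

/-- `S 0 = -1`, `S (θ̄_i α β) = i`. -/
def S : BTerm → ℤ
  | zero => -1
  | th i _ _ => i

/-- The coefficient sets `K_j`. -/
def K (j : ℕ) : BTerm → Finset BTerm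
  | zero => ∅
  | th i a b => if j < i then K j a ∪ K j b else {th i a b}

/-- Membership in `T_n`. -/
inductive WF (n : ℕ) : BTerm → Prop
  | zero : WF n zero
  | th {i : ℕ} {a b : BTerm} : WF n a → WF n b → S a ≤ (i : ℤ) + 1 → S b ≤ (i : ℤ) →
      i < n → WF n (th i a b)

mutual
/-- The order on binary theta terms. -/
inductive Lt : BTerm → BTerm → Prop
  | zero {t : BTerm} : t ≠ zero → Lt zero t
  | idx {i j : ℕ} {a b c d : BTerm} : i < j → Lt (th i a b) (th j c d)
  | c1 {i : ℕ} {a b c d : BTerm} : Lt a c → (∀ x ∈ K i a, Lt x (th i c d)) →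
      Lt b (th i c d) → Lt (th i a b) (th i c d)
  | c2 {i : ℕ} {a b d : BTerm} : Lt b d → Lt (th i a b) (th i a d)
  | c3 {i : ℕ} {a b c d : BTerm} : Lt c a → (∀ x ∈ K i c, Le (th i a b) x) →
      Le (th i a b) d → Lt (th i a b) (th i c d)

inductive Le : BTerm → BTerm → Prop
  | refl {a : BTerm} : Le a a
  | of_lt {a b : BTerm} : Lt a b → Le a b
end

end BTerm

/-- Replace every `θ̄_i` by `θ̄_{i-1}`. -/
def BTerm.minus : BTerm → BTerm
  | BTerm.zero => BTerm.zero
  | BTerm.th i a b => BTerm.th (i - 1) (BTerm.minus a) (BTerm.minus b)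

namespace BTerm

/-- All indices are ≥ 1. -/
def Pos : BTerm → Prop
  | zero => True
  | th i a b => 1 ≤ i ∧ Pos a ∧ Pos b

theorem pos_of_K0 : ∀ {a : BTerm}, K 0 a = ∅ → Pos a := by
  intro a
  induction a with
  | zero => intro _; trivial
  | th i a b iha ihb =>
    intro h
    simp only [K] at h
    by_cases hi : 0 < i
    · rw [if_pos hi, Finset.union_eq_empty] at h
      exact ⟨hi, iha h.1, ihb h.2⟩
    · rw [if_neg hi] at h
      simp at h

theorem pos_K : ∀ {a : BTerm} (j : ℕ) {x : BTerm}, Pos a → x ∈ K j a → Pos x := by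
  intro a
  induction a with
  | zero => intro j x _ hx; simp [K] at hx
  | th i a b iha ihb =>
    intro j x hp hx
    simp only [K] at hx
    by_cases hj : j < i
    · rw [if_pos hj, Finset.mem_union] at hx
      rcases hx with hx | hx
      · exact iha j hp.2.1 hx
      · exact ihb j hp.2.2 hx
    · rw [if_neg hj, Finset.mem_singleton] at hx
      exact hx ▸ hp

theorem K_minus : ∀ {a : BTerm}, Pos a → ∀ i : ℕ,
    (K (i + 1) a).image minus = K i (minus a) := by
  intro a
  induction a with
  | zero => intro _ i; simp [K, minus]
  | th j a b iha ihb =>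
    intro hp i
    have hj : 1 ≤ j := hp.1
    simp only [K, minus]
    by_cases h : i + 1 < j
    · rw [if_pos h, if_pos (by omega : i < j - 1), Finset.image_union,
        iha hp.2.1 i, ihb hp.2.2 i]
    · rw [if_neg h, if_neg (by omega : ¬ i < j - 1)]
      simp [minus]

theorem minus_ne_zero : ∀ {t : BTerm}, t ≠ zero → minus t ≠ zero := by
  intro t h
  cases t with
  | zero => exact absurd rfl h
  | th i a b => simp [minus]

theorem lt_minus_main : ∀ {a b : BTerm}, Lt a b →
    (Pos a → Pos b → Lt (minus a) (minus b)) := by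
  intro a b h
  induction h using Lt.rec
    (motive_2 := fun a b _ => Pos a → Pos b → Le (minus a) (minus b)) with
  | zero h => exact fun _ _ => Lt.zero (minus_ne_zero h)
  | @idx i j a b c d hij =>
      intro ha hb
      exact Lt.idx (by have := ha.1; have := hb.1; omega : i - 1 < j - 1)
  | @c1 i a b c d hac hK hbd ih1 ih2 ih3 =>
      intro ha hb
      refine Lt.c1 (ih1 ha.2.1 hb.2.1) ?_ (ih3 ha.2.2 hb)
      have hi : 1 ≤ i := ha.1
      intro x hx
      rw [← K_minus ha.2.1, (by omega : i - 1 + 1 = i), Finset.mem_image] at hx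
      obtain ⟨y, hy, rfl⟩ := hx
      exact ih2 y hy (pos_K i ha.2.1 hy) hb
  | @c2 i a b d hbd ih =>
      intro ha hb
      exact Lt.c2 (ih ha.2.2 hb.2.2)
  | @c3 i a b c d hca hK hd ih1 ih2 ih3 =>
      intro ha hb
      refine Lt.c3 (ih1 hb.2.1 ha.2.1) ?_ (ih3 ha hb.2.2)
      have hi : 1 ≤ i := hb.1
      intro x hx
      rw [← K_minus hb.2.1, (by omega : i - 1 + 1 = i), Finset.mem_image] at hx
      obtain ⟨y, hy, rfl⟩ := hx
      exact ih2 y hy ha (pos_K i hb.2.1 hy)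
  | refl => exact Le.refl
  | of_lt h ih => rename_i ha hb; exact Le.of_lt (ih ha hb)

theorem lt_minus {a b : BTerm} (ha : Pos a) (hb : Pos b) (h : Lt a b) :
    Lt (minus a) (minus b) := lt_minus_main h ha hb


end BTerm
/-- If `K₀(α) = K₀(β) = ∅` and `α < β`, then `α⁻ < β⁻`; moreover
`(K_{i+1}(α))⁻ = K_i(α⁻)`. -/
theorem stmt18 (α β : BTerm) (hα : BTerm.K 0 α = ∅) (hβ : BTerm.K 0 β = ∅) :
    (BTerm.Lt α β → BTerm.Lt (BTerm.minus α) (BTerm.minus β)) ∧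
    (∀ i : ℕ, (BTerm.K (i + 1) α).image BTerm.minus = BTerm.K i (BTerm.minus α)) := by
  exact ⟨fun h => BTerm.lt_minus (BTerm.pos_of_K0 hα) (BTerm.pos_of_K0 hβ) h,
    BTerm.K_minus (BTerm.pos_of_K0 hα)⟩
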